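/- For symmetric positive semidefinite P, ‖(R + H P Hᵀ)^{-1/2}((R + H P Hᵀ)^{1/2} + R^{1/2})^{-1}‖ ≤ (1/2)‖R^{-1}‖ in spectral norm. -/

import Mathlib

open Matrix
open scoped Matrix.Norms.L2Operator

section
open scoped ComplexOrder

/-- The square root of a positive semidefinite matrix, as defined in Mathlib (Dec 2024),
since removed from Mathlib. -/
noncomputable def Matrix.PosSemidef.sqrt {n 𝕜 : Type*} [RCLike 𝕜] [Fintype n] [DecidableEq n]
    {A : Matrix n n 𝕜} (hA : A.PosSemidef) : Matrix n n 𝕜 :=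
  (hA.1.eigenvectorUnitary : Matrix n n 𝕜) *
    diagonal ((fun x : ℝ => (x : 𝕜)) ∘ (fun x : ℝ => √x) ∘ hA.1.eigenvalues) *
    (star hA.1.eigenvectorUnitary : Matrix n n 𝕜)

end

lemma Matrix.PosSemidef.sqrt_mul_self {n : Type*} [Fintype n] [DecidableEq n]
    {A : Matrix n n ℝ} (hA : A.PosSemidef) : hA.sqrt * hA.sqrt = A := by
  unfold Matrix.PosSemidef.sqrt
  have hUU : (star hA.1.eigenvectorUnitary : Matrix n n ℝ) *
      (hA.1.eigenvectorUnitary : Matrix n n ℝ) = 1 := Unitary.coe_star_mul_self _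
  have hDD : diagonal ((fun x : ℝ => (RCLike.ofReal x : ℝ)) ∘ (fun x : ℝ => √x) ∘ hA.1.eigenvalues) *
      diagonal ((fun x : ℝ => (RCLike.ofReal x : ℝ)) ∘ (fun x : ℝ => √x) ∘ hA.1.eigenvalues) =
      diagonal (RCLike.ofReal ∘ hA.1.eigenvalues) := by
    rw [diagonal_mul_diagonal]
    congr 1
    funext i
    simp [Real.mul_self_sqrt (hA.eigenvalues_nonneg i)]
  have hsp := hA.1.spectral_theorem
  rw [Unitary.conjStarAlgAut_apply] at hsp
  calc _ = (hA.1.eigenvectorUnitary : Matrix n n ℝ) *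
        (diagonal ((fun x : ℝ => (RCLike.ofReal x : ℝ)) ∘ (fun x : ℝ => √x) ∘ hA.1.eigenvalues) *
        ((star hA.1.eigenvectorUnitary : Matrix n n ℝ) * (hA.1.eigenvectorUnitary : Matrix n n ℝ)) *
        diagonal ((fun x : ℝ => (RCLike.ofReal x : ℝ)) ∘ (fun x : ℝ => √x) ∘ hA.1.eigenvalues)) *
        (star hA.1.eigenvectorUnitary : Matrix n n ℝ) := by simp only [Matrix.mul_assoc]
    _ = A := by
      rw [hUU, Matrix.mul_one, hDD]
      exact hsp.symm

lemma Matrix.PosSemidef.posSemidef_sqrt {n : Type*} [Fintype n] [DecidableEq n]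
    {A : Matrix n n ℝ} (hA : A.PosSemidef) : hA.sqrt.PosSemidef := by
  unfold Matrix.PosSemidef.sqrt
  have hD : (diagonal ((fun x : ℝ => (x : ℝ)) ∘ (fun x : ℝ => √x) ∘ hA.1.eigenvalues)).PosSemidef :=
    Matrix.PosSemidef.diagonal (fun i => by simp [Real.sqrt_nonneg])
  have := hD.mul_mul_conjTranspose_same (hA.1.eigenvectorUnitary : Matrix n n ℝ)
  simpa [Unitary.coe_star, star_eq_conjTranspose] using this

namespace Stmt14Aux

variable {q : ℕ}

lemma norm_emb_sq (v : Fin q → ℝ) :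
    ‖(EuclideanSpace.equiv (Fin q) ℝ).symm v‖ ^ 2 = v ⬝ᵥ v := by
  rw [EuclideanSpace.norm_sq_eq]
  simp [dotProduct, sq]

lemma inner_emb (x : EuclideanSpace ℝ (Fin q)) (v : Fin q → ℝ) :
    (inner ℝ x ((EuclideanSpace.equiv (Fin q) ℝ).symm v) : ℝ) = (x : Fin q → ℝ) ⬝ᵥ v := by
  simp [PiLp.inner_apply, dotProduct, mul_comm]

/-- quadratic form of a symmetric square equals norm squared. -/
lemma qform_sq (B : Matrix (Fin q) (Fin q) ℝ) (hB : Bᵀ = B)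
    (x : EuclideanSpace ℝ (Fin q)) :
    (x : Fin q → ℝ) ⬝ᵥ ((B * B) *ᵥ (x : Fin q → ℝ)) =
      ‖(EuclideanSpace.equiv (Fin q) ℝ).symm (B *ᵥ (x : Fin q → ℝ))‖ ^ 2 := by
  rw [norm_emb_sq, ← Matrix.mulVec_mulVec, Matrix.dotProduct_mulVec]
  congr 1
  conv_lhs => rw [← hB]
  rw [Matrix.vecMul_transpose]

/-- norm of inverse bound from coercivity of mulVec. -/
lemma inv_norm_le (M : Matrix (Fin q) (Fin q) ℝ) (hM : IsUnit M.det)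
    {c : ℝ} (hc : 0 < c)
    (h : ∀ x : EuclideanSpace ℝ (Fin q),
      c * ‖x‖ ≤ ‖(EuclideanSpace.equiv (Fin q) ℝ).symm (M *ᵥ (x : Fin q → ℝ))‖) :
    ‖M⁻¹‖ ≤ c⁻¹ := by
  rw [Matrix.cstar_norm_def]
  refine ContinuousLinearMap.opNorm_le_bound _ (by positivity) fun y => ?_
  have key : toEuclideanCLM (n := Fin q) (𝕜 := ℝ) M⁻¹ y =
      (EuclideanSpace.equiv (Fin q) ℝ).symm (M⁻¹ *ᵥ (y : Fin q → ℝ)) := rfl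
  rw [key]
  set x : EuclideanSpace ℝ (Fin q) :=
    (EuclideanSpace.equiv (Fin q) ℝ).symm (M⁻¹ *ᵥ (y : Fin q → ℝ)) with hx
  have h2 := h x
  have h3 : M *ᵥ (x : Fin q → ℝ) = (y : Fin q → ℝ) := by
    rw [hx]
    show M *ᵥ (M⁻¹ *ᵥ (y : Fin q → ℝ)) = _
    rw [Matrix.mulVec_mulVec, Matrix.mul_nonsing_inv _ hM, Matrix.one_mulVec]
  rw [h3] at h2
  have h4 : ‖(EuclideanSpace.equiv (Fin q) ℝ).symm (y : Fin q → ℝ)‖ = ‖y‖ := rfl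
  rw [h4] at h2
  calc ‖x‖ = c⁻¹ * (c * ‖x‖) := by field_simp
    _ ≤ c⁻¹ * ‖y‖ := mul_le_mul_of_nonneg_left h2 (inv_nonneg.mpr hc.le)

/-- norm of square root inverse squared equals norm of inverse. -/
lemma sqrt_inv_sq {M B : Matrix (Fin q) (Fin q) ℝ} (hB : Bᵀ = B) (hBB : B * B = M) :
    ‖B⁻¹‖ * ‖B⁻¹‖ = ‖M⁻¹‖ := by
  have h1 : (B⁻¹)ᴴ = B⁻¹ := by
    rw [Matrix.conjTranspose_nonsing_inv, Matrix.conjTranspose_eq_transpose_of_trivial, hB]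
  have h2 := Matrix.l2_opNorm_conjTranspose_mul_self (B⁻¹)
  rw [h1] at h2
  rw [← hBB, Matrix.mul_inv_rev]
  exact h2.symm

/-- coercivity of mulVec from norm of inverse bound. -/
lemma coercive (M : Matrix (Fin q) (Fin q) ℝ) (hM : IsUnit M.det)
    {ν : ℝ} (hν : 0 < ν) (hb : ‖M⁻¹‖ ≤ ν) (x : EuclideanSpace ℝ (Fin q)) :
    ν⁻¹ * ‖x‖ ≤ ‖(EuclideanSpace.equiv (Fin q) ℝ).symm (M *ᵥ (x : Fin q → ℝ))‖ := by
  have h3 : M⁻¹ *ᵥ (M *ᵥ (x : Fin q → ℝ)) = (x : Fin q → ℝ) := by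
    rw [Matrix.mulVec_mulVec, Matrix.nonsing_inv_mul _ hM, Matrix.one_mulVec]
  have h4 := Matrix.l2_opNorm_mulVec M⁻¹
    ((EuclideanSpace.equiv (Fin q) ℝ).symm (M *ᵥ (x : Fin q → ℝ)))
  have h5 : ‖x‖ ≤ ‖M⁻¹‖ * ‖(EuclideanSpace.equiv (Fin q) ℝ).symm (M *ᵥ (x : Fin q → ℝ))‖ := by
    calc ‖x‖ = ‖(EuclideanSpace.equiv (Fin q) ℝ).symm
          (M⁻¹ *ᵥ ((EuclideanSpace.equiv (Fin q) ℝ).symm (M *ᵥ (x : Fin q → ℝ)) : Fin q → ℝ))‖ := by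
          rw [show ((EuclideanSpace.equiv (Fin q) ℝ).symm (M *ᵥ (x : Fin q → ℝ)) : Fin q → ℝ)
              = M *ᵥ (x : Fin q → ℝ) from rfl, h3]
          rfl
      _ ≤ _ := h4
  have hnorm_nonneg : (0:ℝ) ≤ ‖(EuclideanSpace.equiv (Fin q) ℝ).symm (M *ᵥ (x : Fin q → ℝ))‖ :=
    norm_nonneg _
  calc ν⁻¹ * ‖x‖ ≤ ν⁻¹ * (ν * ‖(EuclideanSpace.equiv (Fin q) ℝ).symm (M *ᵥ (x : Fin q → ℝ))‖) := by
        refine mul_le_mul_of_nonneg_left (h5.trans ?_) (inv_nonneg.mpr hν.le)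
        exact mul_le_mul_of_nonneg_right hb hnorm_nonneg
    _ = _ := by field_simp

/-- quadratic form lower bound. -/
lemma qform_lower {M : Matrix (Fin q) (Fin q) ℝ} (hM : M.PosSemidef)
    (hMd : IsUnit M.det) (x : EuclideanSpace ℝ (Fin q)) :
    ‖x‖ ^ 2 ≤ ‖M⁻¹‖ * ((x : Fin q → ℝ) ⬝ᵥ (M *ᵥ (x : Fin q → ℝ))) := by
  set B := hM.sqrt with hBdef
  have hBB : B * B = M := hM.sqrt_mul_self
  have hBs : Bᵀ = B := by
    rw [← Matrix.conjTranspose_eq_transpose_of_trivial]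
    exact hM.posSemidef_sqrt.1
  have hBd : IsUnit B.det := by
    have : B.det * B.det = M.det := by rw [← Matrix.det_mul, hBB]
    exact isUnit_of_mul_isUnit_left (this ▸ hMd)
  have hq : (x : Fin q → ℝ) ⬝ᵥ (M *ᵥ (x : Fin q → ℝ)) =
      ‖(EuclideanSpace.equiv (Fin q) ℝ).symm (B *ᵥ (x : Fin q → ℝ))‖ ^ 2 := by
    rw [← hBB, qform_sq B hBs]
  rw [hq]
  have hx : ‖x‖ ≤ ‖B⁻¹‖ * ‖(EuclideanSpace.equiv (Fin q) ℝ).symm (B *ᵥ (x : Fin q → ℝ))‖ := by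
    have h3 : B⁻¹ *ᵥ (B *ᵥ (x : Fin q → ℝ)) = (x : Fin q → ℝ) := by
      rw [Matrix.mulVec_mulVec, Matrix.nonsing_inv_mul _ hBd, Matrix.one_mulVec]
    have h4 := Matrix.l2_opNorm_mulVec B⁻¹
      ((EuclideanSpace.equiv (Fin q) ℝ).symm (B *ᵥ (x : Fin q → ℝ)))
    calc ‖x‖ = ‖(EuclideanSpace.equiv (Fin q) ℝ).symm
          (B⁻¹ *ᵥ ((EuclideanSpace.equiv (Fin q) ℝ).symm (B *ᵥ (x : Fin q → ℝ)) : Fin q → ℝ))‖ := by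
          rw [show ((EuclideanSpace.equiv (Fin q) ℝ).symm (B *ᵥ (x : Fin q → ℝ)) : Fin q → ℝ)
              = B *ᵥ (x : Fin q → ℝ) from rfl, h3]
          rfl
      _ ≤ _ := h4
  have hinv := sqrt_inv_sq hBs hBB
  calc ‖x‖ ^ 2 ≤ (‖B⁻¹‖ * ‖(EuclideanSpace.equiv (Fin q) ℝ).symm (B *ᵥ (x : Fin q → ℝ))‖) ^ 2 :=
        pow_le_pow_left₀ (norm_nonneg _) hx 2
    _ = ‖M⁻¹‖ * ‖(EuclideanSpace.equiv (Fin q) ℝ).symm (B *ᵥ (x : Fin q → ℝ))‖ ^ 2 := by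
        rw [mul_pow, sq, hinv]

end Stmt14Aux

open Stmt14Aux in
/-- `‖(R + H P Hᵀ)^{-1/2} ((R + H P Hᵀ)^{1/2} + R^{1/2})⁻¹‖ ≤ (1/2) ‖R⁻¹‖`
for `P` symmetric positive semidefinite. -/
theorem stmt_14 {d q : ℕ} (P : Matrix (Fin d) (Fin d) ℝ) (hP : P.PosSemidef)
    (H : Matrix (Fin q) (Fin d) ℝ) (R : Matrix (Fin q) (Fin q) ℝ) (hR : R.PosDef)
    (hA : (R + H * P * Hᵀ).PosDef) :
    ‖(hA.posSemidef.sqrt)⁻¹ * (hA.posSemidef.sqrt + hR.posSemidef.sqrt)⁻¹‖ ≤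
      (1 / 2) * ‖R⁻¹‖ := by
  classical
  set S := hA.posSemidef.sqrt with hSdef
  set T := hR.posSemidef.sqrt with hTdef
  rcases Nat.eq_zero_or_pos q with hq | hq
  · subst hq
    have h0 : (S⁻¹ * (S + T)⁻¹) = 0 := Subsingleton.elim _ _
    rw [h0, norm_zero]
    positivity
  haveI : NeZero q := ⟨hq.ne'⟩
  have hSS : S * S = R + H * P * Hᵀ := hA.posSemidef.sqrt_mul_self
  have hTT : T * T = R := hR.posSemidef.sqrt_mul_self
  have hSs : Sᵀ = S := by
    rw [← Matrix.conjTranspose_eq_transpose_of_trivial]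
    exact hA.posSemidef.posSemidef_sqrt.1
  have hTs : Tᵀ = T := by
    rw [← Matrix.conjTranspose_eq_transpose_of_trivial]
    exact hR.posSemidef.posSemidef_sqrt.1
  have hSd : IsUnit S.det := by
    have h : S.det * S.det = (R + H * P * Hᵀ).det := by rw [← Matrix.det_mul, hSS]
    exact isUnit_of_mul_isUnit_left (h ▸ hA.det_pos.ne'.isUnit)
  have hTd : IsUnit T.det := by
    have h : T.det * T.det = R.det := by rw [← Matrix.det_mul, hTT]
    exact isUnit_of_mul_isUnit_left (h ▸ hR.det_pos.ne'.isUnit)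
  set ν : ℝ := ‖T⁻¹‖ with hνdef
  have hν : 0 < ν := by
    rw [hνdef, norm_pos_iff]
    intro h
    have h1 : T⁻¹ * T = 1 := Matrix.nonsing_inv_mul _ hTd
    rw [h, zero_mul] at h1
    exact one_ne_zero h1.symm
  -- coercivity of S
  have coercS : ∀ x : EuclideanSpace ℝ (Fin q),
      ν⁻¹ * ‖x‖ ≤ ‖(EuclideanSpace.equiv (Fin q) ℝ).symm (S *ᵥ (x : Fin q → ℝ))‖ := by
    intro x
    have coT := coercive T hTd hν le_rfl x
    have e1 : ‖(EuclideanSpace.equiv (Fin q) ℝ).symm (S *ᵥ (x : Fin q → ℝ))‖ ^ 2 =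
        (x : Fin q → ℝ) ⬝ᵥ (R *ᵥ (x : Fin q → ℝ)) +
        (x : Fin q → ℝ) ⬝ᵥ ((H * P * Hᵀ) *ᵥ (x : Fin q → ℝ)) := by
      rw [← qform_sq S hSs x, hSS, Matrix.add_mulVec, dotProduct_add]
    have psd : 0 ≤ (x : Fin q → ℝ) ⬝ᵥ ((H * P * Hᵀ) *ᵥ (x : Fin q → ℝ)) := by
      have h1 : (x : Fin q → ℝ) ⬝ᵥ ((H * P * Hᵀ) *ᵥ (x : Fin q → ℝ)) =
          (Hᵀ *ᵥ (x : Fin q → ℝ)) ⬝ᵥ (P *ᵥ (Hᵀ *ᵥ (x : Fin q → ℝ))) := by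
        rw [← Matrix.mulVec_mulVec, ← Matrix.mulVec_mulVec, Matrix.dotProduct_mulVec x H,
          ← Matrix.mulVec_transpose]
      rw [h1]
      simpa using hP.dotProduct_mulVec_nonneg (Hᵀ *ᵥ (x : Fin q → ℝ))
    have e2 : (x : Fin q → ℝ) ⬝ᵥ (R *ᵥ (x : Fin q → ℝ)) =
        ‖(EuclideanSpace.equiv (Fin q) ℝ).symm (T *ᵥ (x : Fin q → ℝ))‖ ^ 2 := by
      rw [← hTT, qform_sq T hTs x]
    have key : (ν⁻¹ * ‖x‖) ^ 2 ≤
        ‖(EuclideanSpace.equiv (Fin q) ℝ).symm (S *ᵥ (x : Fin q → ℝ))‖ ^ 2 := by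
      rw [e1, e2]
      have h2 : (ν⁻¹ * ‖x‖) ^ 2 ≤
          ‖(EuclideanSpace.equiv (Fin q) ℝ).symm (T *ᵥ (x : Fin q → ℝ))‖ ^ 2 :=
        pow_le_pow_left₀ (by positivity) coT 2
      linarith
    exact le_of_pow_le_pow_left₀ two_ne_zero (norm_nonneg _) key
  have hSninv : ‖S⁻¹‖ ≤ ν := by
    have h := inv_norm_le S hSd (inv_pos.mpr hν) coercS
    rwa [inv_inv] at h
  -- quadratic form lower bounds
  have qS : ∀ x : EuclideanSpace ℝ (Fin q),
      ‖x‖ ^ 2 ≤ ν * ((x : Fin q → ℝ) ⬝ᵥ (S *ᵥ (x : Fin q → ℝ))) := by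
    intro x
    have h1 := qform_lower hA.posSemidef.posSemidef_sqrt hSd x
    have h2 : 0 ≤ (x : Fin q → ℝ) ⬝ᵥ (S *ᵥ (x : Fin q → ℝ)) := by
      simpa using hA.posSemidef.posSemidef_sqrt.dotProduct_mulVec_nonneg (x : Fin q → ℝ)
    exact h1.trans (mul_le_mul_of_nonneg_right hSninv h2)
  have qT : ∀ x : EuclideanSpace ℝ (Fin q),
      ‖x‖ ^ 2 ≤ ν * ((x : Fin q → ℝ) ⬝ᵥ (T *ᵥ (x : Fin q → ℝ))) :=
    fun x => qform_lower hR.posSemidef.posSemidef_sqrt hTd x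
  -- S + T is invertible
  have hSpd : S.PosDef := by
    refine Matrix.PosDef.of_dotProduct_mulVec_pos hA.posSemidef.posSemidef_sqrt.1 fun v hv => ?_
    have h1 := qS ((EuclideanSpace.equiv (Fin q) ℝ).symm v)
    have h2 : (0:ℝ) < ‖(EuclideanSpace.equiv (Fin q) ℝ).symm v‖ ^ 2 := by
      have hne : (EuclideanSpace.equiv (Fin q) ℝ).symm v ≠ 0 := by
        simpa using hv
      exact pow_pos (norm_pos_iff.mpr hne) 2
    have h3 : 0 < ν * (v ⬝ᵥ (S *ᵥ v)) := lt_of_lt_of_le h2 h1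
    have h4 : 0 < v ⬝ᵥ (S *ᵥ v) := by nlinarith
    simpa using h4
  have hTpd : T.PosDef := by
    refine Matrix.PosDef.of_dotProduct_mulVec_pos hR.posSemidef.posSemidef_sqrt.1 fun v hv => ?_
    have h1 := qT ((EuclideanSpace.equiv (Fin q) ℝ).symm v)
    have h2 : (0:ℝ) < ‖(EuclideanSpace.equiv (Fin q) ℝ).symm v‖ ^ 2 := by
      have hne : (EuclideanSpace.equiv (Fin q) ℝ).symm v ≠ 0 := by
        simpa using hv
      exact pow_pos (norm_pos_iff.mpr hne) 2
    have h3 : 0 < ν * (v ⬝ᵥ (T *ᵥ v)) := lt_of_lt_of_le h2 h1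
    have h4 : 0 < v ⬝ᵥ (T *ᵥ v) := by nlinarith
    simpa using h4
  have hSTd : IsUnit (S + T).det := (hSpd.add hTpd).det_pos.ne'.isUnit
  -- coercivity of S + T
  have coercST : ∀ x : EuclideanSpace ℝ (Fin q),
      (2 * ν⁻¹) * ‖x‖ ≤ ‖(EuclideanSpace.equiv (Fin q) ℝ).symm ((S + T) *ᵥ (x : Fin q → ℝ))‖ := by
    intro x
    have hq1 : 2 * ν⁻¹ * ‖x‖ ^ 2 ≤ (x : Fin q → ℝ) ⬝ᵥ ((S + T) *ᵥ (x : Fin q → ℝ)) := by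
      have h1 := qS x
      have h2 := qT x
      rw [Matrix.add_mulVec, dotProduct_add]
      have h3 : ν⁻¹ * ‖x‖ ^ 2 ≤ (x : Fin q → ℝ) ⬝ᵥ (S *ᵥ (x : Fin q → ℝ)) := by
        calc ν⁻¹ * ‖x‖ ^ 2 ≤ ν⁻¹ * (ν * ((x : Fin q → ℝ) ⬝ᵥ (S *ᵥ (x : Fin q → ℝ)))) :=
              mul_le_mul_of_nonneg_left h1 (inv_nonneg.mpr hν.le)
          _ = _ := by field_simp
      have h4 : ν⁻¹ * ‖x‖ ^ 2 ≤ (x : Fin q → ℝ) ⬝ᵥ (T *ᵥ (x : Fin q → ℝ)) := by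
        calc ν⁻¹ * ‖x‖ ^ 2 ≤ ν⁻¹ * (ν * ((x : Fin q → ℝ) ⬝ᵥ (T *ᵥ (x : Fin q → ℝ)))) :=
              mul_le_mul_of_nonneg_left h2 (inv_nonneg.mpr hν.le)
          _ = _ := by field_simp
      linarith
    have hcs : (x : Fin q → ℝ) ⬝ᵥ ((S + T) *ᵥ (x : Fin q → ℝ)) ≤
        ‖x‖ * ‖(EuclideanSpace.equiv (Fin q) ℝ).symm ((S + T) *ᵥ (x : Fin q → ℝ))‖ := by
      rw [← inner_emb x ((S + T) *ᵥ (x : Fin q → ℝ))]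
      exact real_inner_le_norm _ _
    rcases eq_or_ne (‖x‖) 0 with hx0 | hx0
    · rw [hx0, mul_zero]
      exact norm_nonneg _
    have hxpos : 0 < ‖x‖ := lt_of_le_of_ne (norm_nonneg _) (Ne.symm hx0)
    have key : (2 * ν⁻¹ * ‖x‖) * ‖x‖ ≤
        ‖(EuclideanSpace.equiv (Fin q) ℝ).symm ((S + T) *ᵥ (x : Fin q → ℝ))‖ * ‖x‖ := by
      calc (2 * ν⁻¹ * ‖x‖) * ‖x‖ = 2 * ν⁻¹ * ‖x‖ ^ 2 := by ring
        _ ≤ (x : Fin q → ℝ) ⬝ᵥ ((S + T) *ᵥ (x : Fin q → ℝ)) := hq1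
        _ ≤ _ := by linarith [hcs]
    exact le_of_mul_le_mul_right key hxpos
  have hSTninv : ‖(S + T)⁻¹‖ ≤ (2 * ν⁻¹)⁻¹ :=
    inv_norm_le (S + T) hSTd (by positivity) coercST
  have hRinv : ν * ν = ‖R⁻¹‖ := sqrt_inv_sq hTs hTT
  calc ‖S⁻¹ * (S + T)⁻¹‖ ≤ ‖S⁻¹‖ * ‖(S + T)⁻¹‖ := norm_mul_le _ _
    _ ≤ ν * (2 * ν⁻¹)⁻¹ := by
        apply mul_le_mul hSninv hSTninv (norm_nonneg _) hν.le
    _ = (1 / 2) * (ν * ν) := by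
        rw [mul_inv, inv_inv]
        ring
    _ = (1 / 2) * ‖R⁻¹‖ := by rw [hRinv]
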